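/- Let σ > 0 and λ > 0, and write F_C(x) = F_C(x; 0, λ), f_C(x) = f_C(x; 0, λ), F_G(x) = F_G(x; 0, σ), f_G(x) = f_G(x; 0, σ). If F_G(x) > F_C(x) for all x > 0, then there do not exist x₁ > 0 and x₂ > 0 such that f_G(x₁) = f_C(x₂) and F_G(x₁) + f_G(x₁)·(x₂ − x₁) = F_C(x₂); that is, no line tangent to the Gaussian CDF at a positive point is also tangent to the Cauchy CDF at a positive point. -/
import Mathlib


/-- Gaussian PDF with location `μ` and scale `σ`. -/
noncomputable def gaussPDF (μ σ x : ℝ) : ℝ :=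
  (1 / (σ * Real.sqrt (2 * Real.pi))) * Real.exp (-(x - μ) ^ 2 / (2 * σ ^ 2))

/-- Gaussian CDF with location `μ` and scale `σ`. -/
noncomputable def gaussCDF (μ σ x : ℝ) : ℝ :=
  ∫ t in Set.Iic x, gaussPDF μ σ t

/-- Cauchy PDF with location `m` and scale `lam`. -/
noncomputable def cauchyPDF (m lam x : ℝ) : ℝ :=
  1 / (lam * Real.pi * (1 + ((x - m) / lam) ^ 2))

/-- Cauchy CDF with location `m` and scale `lam`. -/
noncomputable def cauchyCDF (m lam x : ℝ) : ℝ :=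
  1 / 2 + (1 / Real.pi) * Real.arctan ((x - m) / lam)

lemma gaussPDF_integrable (σ : ℝ) (hσ : 0 < σ) :
    MeasureTheory.Integrable (gaussPDF 0 σ) := by
  have h := (integrable_exp_neg_mul_sq (b := 1 / (2 * σ ^ 2)) (by positivity)).const_mul
    (1 / (σ * Real.sqrt (2 * Real.pi)))
  convert h using 2 with x
  unfold gaussPDF
  ring_nf

lemma gaussPDF_anti (σ : ℝ) (hσ : 0 < σ) {a t : ℝ} (ha : 0 ≤ a) (hat : a ≤ t) :
    gaussPDF 0 σ t ≤ gaussPDF 0 σ a := by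
  unfold gaussPDF
  have hc : (0:ℝ) < 1 / (σ * Real.sqrt (2 * Real.pi)) := by positivity
  have hsq : a ^ 2 ≤ t ^ 2 := by nlinarith
  have : Real.exp (-(t - 0) ^ 2 / (2 * σ ^ 2)) ≤ Real.exp (-(a - 0) ^ 2 / (2 * σ ^ 2)) := by
    apply Real.exp_le_exp.2
    rw [div_le_div_iff_of_pos_right (by positivity)]
    simpa using neg_le_neg hsq
  nlinarith

lemma gauss_tangent_above (σ : ℝ) (hσ : 0 < σ) {x₁ x₂ : ℝ} (h1 : 0 < x₁) (h2 : 0 < x₂) :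
    gaussCDF 0 σ x₂ ≤ gaussCDF 0 σ x₁ + gaussPDF 0 σ x₁ * (x₂ - x₁) := by
  have hint := gaussPDF_integrable σ hσ
  have hdiff : gaussCDF 0 σ x₂ - gaussCDF 0 σ x₁ = ∫ t in x₁..x₂, gaussPDF 0 σ t := by
    unfold gaussCDF
    rw [intervalIntegral.integral_Iic_sub_Iic hint.integrableOn hint.integrableOn]
  have hii : ∀ a b : ℝ, IntervalIntegrable (gaussPDF 0 σ) MeasureTheory.volume a b :=
    fun a b => hint.intervalIntegrable
  rcases le_total x₁ x₂ with hle | hle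
  · have hmono : ∫ t in x₁..x₂, gaussPDF 0 σ t ≤ ∫ t in x₁..x₂, gaussPDF 0 σ x₁ := by
      apply intervalIntegral.integral_mono_on hle (hii x₁ x₂) intervalIntegrable_const
      intro t ht
      exact gaussPDF_anti σ hσ h1.le ht.1
    rw [intervalIntegral.integral_const] at hmono
    simp only [smul_eq_mul] at hmono
    linarith [hdiff, hmono, mul_comm (gaussPDF 0 σ x₁) (x₂ - x₁)]
  · have hmono : ∫ t in x₂..x₁, gaussPDF 0 σ x₁ ≤ ∫ t in x₂..x₁, gaussPDF 0 σ t := by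
      apply intervalIntegral.integral_mono_on hle intervalIntegrable_const (hii x₂ x₁)
      intro t ht
      exact gaussPDF_anti σ hσ (h2.le.trans ht.1) ht.2
    rw [intervalIntegral.integral_const] at hmono
    simp only [smul_eq_mul] at hmono
    have hsym : ∫ t in x₁..x₂, gaussPDF 0 σ t = -∫ t in x₂..x₁, gaussPDF 0 σ t :=
      (intervalIntegral.integral_symm x₂ x₁)
    rw [hsym] at hdiff
    have hm : (x₁ - x₂) * gaussPDF 0 σ x₁ = -(gaussPDF 0 σ x₁ * (x₂ - x₁)) := by ring
    linarith [hdiff, hmono]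

/-- If the zero-centered Gaussian CDF lies strictly above the zero-centered Cauchy
CDF on `(0, ∞)`, then no line tangent to the Gaussian CDF at a positive point is
also tangent to the Cauchy CDF at a positive point. -/
theorem no_tangential_link (σ lam : ℝ) (hσ : 0 < σ) (hlam : 0 < lam)
    (habove : ∀ x > (0 : ℝ), cauchyCDF 0 lam x < gaussCDF 0 σ x) :
    ¬ ∃ x₁ > (0 : ℝ), ∃ x₂ > (0 : ℝ),
        gaussPDF 0 σ x₁ = cauchyPDF 0 lam x₂ ∧
        gaussCDF 0 σ x₁ + gaussPDF 0 σ x₁ * (x₂ - x₁) = cauchyCDF 0 lam x₂ := by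
  rintro ⟨x₁, hx₁, x₂, hx₂, -, heq⟩
  have h1 := habove x₂ hx₂
  have h2 := gauss_tangent_above σ hσ hx₁ hx₂
  linarith
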